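/- Let k ≥ 2 be an integer and ρ ∈ ℝ. If there exists a k×k matrix A with nonnegative entries, all row sums and column sums equal to 1, and k^{r-2}·Σ_{i,j} a_{ij}^r = ρ (for a fixed integer r ≥ 2), then 1 ≤ ρ ≤ k^{r-1}. Conversely, for every ρ ∈ [1, k^{r-1}] such a doubly stochastic matrix exists. -/

import Mathlib

/-- Feasibility of the constraint `k^{r-2} Σ a_{ij}^r = ρ` over doubly stochastic
matrices: such a matrix exists iff `1 ≤ ρ ≤ k^{r-1}`. -/
theorem doubly_stochastic_power_sum (k r : ℕ) (hk : 2 ≤ k) (hr : 2 ≤ r) :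
    (∀ (ρ : ℝ) (A : Matrix (Fin k) (Fin k) ℝ),
      (∀ i j, 0 ≤ A i j) →
      (∀ i, ∑ j, A i j = 1) →
      (∀ j, ∑ i, A i j = 1) →
      (k : ℝ) ^ (r - 2) * ∑ i, ∑ j, A i j ^ r = ρ →
      1 ≤ ρ ∧ ρ ≤ (k : ℝ) ^ (r - 1)) ∧
    (∀ ρ : ℝ, 1 ≤ ρ → ρ ≤ (k : ℝ) ^ (r - 1) →
      ∃ A : Matrix (Fin k) (Fin k) ℝ,
        (∀ i j, 0 ≤ A i j) ∧
        (∀ i, ∑ j, A i j = 1) ∧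
        (∀ j, ∑ i, A i j = 1) ∧
        (k : ℝ) ^ (r - 2) * ∑ i, ∑ j, A i j ^ r = ρ) := by
  have hkpos : (0:ℝ) < k := by
    have : (0:ℕ) < k := by omega
    exact_mod_cast this
  have hkne : (k:ℝ) ≠ 0 := hkpos.ne'
  constructor
  · -- bounds direction
    intro ρ A hpos hrow hcol hρ
    have hle1 : ∀ i j, A i j ≤ 1 := by
      intro i j
      calc A i j ≤ ∑ j', A i j' := Finset.single_le_sum (fun j' _ => hpos i j') (Finset.mem_univ j)
        _ = 1 := hrow i
    constructor
    · -- lower bound via Jensen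
      subst hρ
      have hJ := pow_sum_div_card_le_sum_pow (s := (Finset.univ : Finset (Fin k × Fin k)))
        (f := fun p => A p.1 p.2) (fun p _ => hpos p.1 p.2) (r - 1)
      have hsum : ∑ p : Fin k × Fin k, A p.1 p.2 = (k:ℝ) := by
        rw [Fintype.sum_prod_type]
        simp [hrow]
      have hcard : ((Finset.univ : Finset (Fin k × Fin k)).card : ℝ) = (k:ℝ)^2 := by
        simp [Finset.card_univ]
        ring
      rw [hsum] at hJ
      have hr1 : r - 1 + 1 = r := by omega
      rw [hr1] at hJ
      have hS : ∑ i, ∑ j, A i j ^ r = ∑ p : Fin k × Fin k, A p.1 p.2 ^ r := by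
        rw [Fintype.sum_prod_type]
      rw [hS]
      have key : (k:ℝ)^(r-2) * ((k:ℝ)^r / ((Finset.univ : Finset (Fin k × Fin k)).card : ℝ)^(r-1)) = 1 := by
        rw [hcard, ← pow_mul, ← mul_div_assoc, ← pow_add,
          div_eq_one_iff_eq (pow_ne_zero _ hkne)]
        congr 1
        omega
      calc (1:ℝ) = (k:ℝ)^(r-2) * ((k:ℝ)^r / ((Finset.univ : Finset (Fin k × Fin k)).card : ℝ)^(r-1)) := key.symm
        _ ≤ (k:ℝ)^(r-2) * ∑ p : Fin k × Fin k, A p.1 p.2 ^ r := by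
            apply mul_le_mul_of_nonneg_left hJ (by positivity)
    · -- upper bound
      subst hρ
      have hSle : ∑ i, ∑ j, A i j ^ r ≤ (k:ℝ) := by
        have : ∀ i, ∑ j, A i j ^ r ≤ 1 := by
          intro i
          calc ∑ j, A i j ^ r ≤ ∑ j, A i j := by
                apply Finset.sum_le_sum
                intro j _
                calc A i j ^ r ≤ A i j ^ 1 := pow_le_pow_of_le_one (hpos i j) (hle1 i j) (by omega)
                  _ = A i j := pow_one _
            _ = 1 := hrow i
        calc ∑ i, ∑ j, A i j ^ r ≤ ∑ i : Fin k, (1:ℝ) := Finset.sum_le_sum fun i _ => this i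
          _ = k := by simp
      calc (k:ℝ)^(r-2) * ∑ i, ∑ j, A i j ^ r ≤ (k:ℝ)^(r-2) * k :=
            mul_le_mul_of_nonneg_left hSle (by positivity)
        _ = (k:ℝ)^(r-1) := by
            rw [← pow_succ]
            congr 1
            omega
  · -- existence direction
    intro ρ h1 h2
    set g : ℝ → ℝ := fun ε =>
      (k:ℝ)^(r-2) * ((k:ℝ) * ((1-ε)/k + ε)^r + (k:ℝ)*((k:ℝ)-1) * ((1-ε)/k)^r) with hg
    have hcont : ContinuousOn g (Set.Icc 0 1) := by
      apply Continuous.continuousOn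
      fun_prop
    have hg0 : g 0 = 1 := by
      simp only [hg, sub_zero, add_zero]
      have : (k:ℝ) * ((1:ℝ)/k)^r + (k:ℝ)*((k:ℝ)-1) * ((1:ℝ)/k)^r = (k:ℝ)^2 * ((1:ℝ)/k)^r := by
        ring
      rw [this, ← mul_assoc, ← pow_add]
      have h2' : r - 2 + 2 = r := by omega
      rw [h2', one_div, inv_pow, mul_inv_cancel₀ (pow_ne_zero _ hkne)]
    have hg1 : g 1 = (k:ℝ)^(r-1) := by
      simp only [hg, sub_self, zero_div, zero_add]
      rw [zero_pow (by omega : r ≠ 0)]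
      rw [one_pow]
      rw [mul_zero, add_zero, mul_one, ← pow_succ]
      congr 1
      omega
    have hmem : ρ ∈ Set.Icc (g 0) (g 1) := by
      rw [hg0, hg1]; exact ⟨h1, h2⟩
    obtain ⟨ε, hε, hgε⟩ := intermediate_value_Icc (by norm_num : (0:ℝ) ≤ 1) hcont hmem
    obtain ⟨hε0, hε1⟩ := hε
    set o : ℝ := (1-ε)/k with ho
    set d : ℝ := (1-ε)/k + ε with hd
    have hone : (0:ℝ) ≤ o := by
      apply div_nonneg (by linarith) hkpos.le
    have hdnn : (0:ℝ) ≤ d := by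
      have := hone
      simp only [hd]; linarith
    refine ⟨fun i j => if i = j then d else o, fun i j => ?_, ?_, ?_, ?_⟩
    · dsimp only; split <;> assumption
    · intro i
      have : ∀ j, (if i = j then d else o) = o + (if i = j then d - o else 0) := by
        intro j; split <;> ring
      simp only [this, Finset.sum_add_distrib, Finset.sum_const, Finset.card_univ,
        Fintype.card_fin, Finset.sum_ite_eq, Finset.mem_univ, if_true, nsmul_eq_mul]
      simp only [ho, hd]
      field_simp
      ring
    · intro j
      have : ∀ i, (if i = j then d else o) = o + (if i = j then d - o else 0) := by
        intro i; split <;> ring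
      simp only [this, Finset.sum_add_distrib, Finset.sum_const, Finset.card_univ,
        Fintype.card_fin, Finset.sum_ite_eq', Finset.mem_univ, if_true, nsmul_eq_mul]
      simp only [ho, hd]
      field_simp
      ring
    · -- power sum equals ρ
      have hrow : ∀ i : Fin k, ∑ j, (if i = j then d else o)^r = d^r + ((k:ℝ)-1) * o^r := by
        intro i
        have : ∀ j, (if i = j then d else o)^r = o^r + (if i = j then d^r - o^r else 0) := by
          intro j; split <;> ring
        simp only [this, Finset.sum_add_distrib, Finset.sum_const, Finset.card_univ,
          Fintype.card_fin, Finset.sum_ite_eq, Finset.mem_univ, if_true, nsmul_eq_mul]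
        ring
      calc (k:ℝ)^(r-2) * ∑ i, ∑ j, (if i = j then d else o)^r
          = (k:ℝ)^(r-2) * ∑ i : Fin k, (d^r + ((k:ℝ)-1) * o^r) := by
            congr 1; exact Finset.sum_congr rfl fun i _ => hrow i
        _ = (k:ℝ)^(r-2) * ((k:ℝ) * d^r + (k:ℝ)*((k:ℝ)-1) * o^r) := by
            rw [Finset.sum_const, Finset.card_univ, Fintype.card_fin, nsmul_eq_mul]; ring
        _ = g ε := by rw [hg]
        _ = ρ := hgε
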